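/- Let G = F_{p₁} × F_{p₂} be a product of free groups of ranks p₁, p₂ ≥ 2, and let u : G → ℤ be a homomorphism nonzero on each factor (e.g., sending each of the p₁ + p₂ standard generators to 1). Then H²(ker u, ℤ/2ℤ) is infinite. -/

import Mathlib

noncomputable section StallingsAux

/-! ### A Laurent-polynomial-like ring over `ZMod 2` and a metabelian group `HH` -/

abbrev R2 : Type := AddMonoidAlgebra (ZMod 2) ℤ

def tt (e : ℤ) : R2 := AddMonoidAlgebra.single e 1

lemma tt_mul_tt (a b : ℤ) : tt a * tt b = tt (a+b) := by
  unfold tt; rw [AddMonoidAlgebra.single_mul_single, one_mul]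

lemma tt_zero : tt 0 = 1 := rfl

lemma R2.add_self (r : R2) : r + r = 0 := by
  have h := two_smul (ZMod 2) r
  rw [show (2:ZMod 2) = 0 from rfl, zero_smul] at h; exact h.symm

lemma R2.two_eq_zero : (2 : R2) = 0 := by
  rw [← one_add_one_eq_two]; exact R2.add_self 1

lemma tt_ne_one {e : ℤ} (he : e ≠ 0) : tt e ≠ 1 := by
  intro h
  have h' : (Finsupp.single e (1:ZMod 2) : ℤ →₀ ZMod 2) = Finsupp.single 0 1 := congrArg AddMonoidAlgebra.coeff h
  have h2 := DFunLike.congr_fun h' e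
  rw [Finsupp.single_eq_same, Finsupp.single_eq_of_ne' (Ne.symm he)] at h2
  exact one_ne_zero h2

lemma tt_sub_one_ne_zero {e : ℤ} (he : e ≠ 0) : tt e - 1 ≠ 0 :=
  sub_ne_zero.2 (tt_ne_one he)

lemma tt_ne_zero (e : ℤ) : tt e ≠ 0 := by
  intro h
  have h' : (Finsupp.single e (1:ZMod 2)) = (0 : ℤ →₀ ZMod 2) := congrArg AddMonoidAlgebra.coeff h
  have h2 := DFunLike.congr_fun h' e
  rw [Finsupp.single_eq_same] at h2
  exact one_ne_zero h2

/-- evaluation of the coefficient at `0`, as an additive map. -/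
def eps : R2 →+ ZMod 2 :=
  (Finsupp.applyAddHom (0:ℤ)).comp AddMonoidAlgebra.coeffAddEquiv.toAddMonoidHom

lemma eps_tt_mul (s : ℤ) (P : R2) : eps (tt s * P) = P.coeff (-s) := by
  show (AddMonoidAlgebra.single s (1:ZMod 2) * P).coeff 0 = P.coeff (-s)
  rw [AddMonoidAlgebra.coeff_single_mul_eq_mul_coeff (-s)
    (fun a _ => by constructor <;> intro h <;> omega), one_mul]

@[ext] structure HH : Type where
  d : R2
  n : ℤ

instance : Group HH where
  mul x y := ⟨x.d + tt x.n * y.d, x.n + y.n⟩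
  one := ⟨0, 0⟩
  inv x := ⟨tt (-x.n) * x.d, -x.n⟩
  mul_assoc x y z := by
    ext : 1
    · show (x.d + tt x.n * y.d) + tt (x.n + y.n) * z.d
        = x.d + tt x.n * (y.d + tt y.n * z.d)
      rw [← tt_mul_tt]; ring
    · show (x.n + y.n) + z.n = x.n + (y.n + z.n); ring
  one_mul x := by
    ext : 1
    · show (0:R2) + tt 0 * x.d = x.d; rw [tt_zero]; ring
    · show 0 + x.n = x.n; ring
  mul_one x := by
    ext : 1
    · show x.d + tt x.n * 0 = x.d; ring
    · show x.n + 0 = x.n; ring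
  inv_mul_cancel x := by
    ext : 1
    · show (tt (-x.n) * x.d) + tt (-x.n) * x.d = (0:R2)
      exact R2.add_self _
    · show -x.n + x.n = 0; ring

lemma HH.mul_d (x y : HH) : (x * y).d = x.d + tt x.n * y.d := rfl
lemma HH.mul_n (x y : HH) : (x * y).n = x.n + y.n := rfl
lemma HH.one_d : (1 : HH).d = 0 := rfl
lemma HH.one_n : (1 : HH).n = 0 := rfl
lemma HH.inv_d (x : HH) : (x⁻¹).d = tt (-x.n) * x.d := rfl
lemma HH.inv_n (x : HH) : (x⁻¹).n = -x.n := rfl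

/-- the `n`-component as a monoid hom. -/
def HH.nHom : HH →* Multiplicative ℤ where
  toFun x := Multiplicative.ofAdd x.n
  map_one' := rfl
  map_mul' x y := rfl

lemma HH.zpow_n (x : HH) (m : ℤ) : (x ^ m).n = m * x.n := by
  induction m using Int.induction_on with
  | zero => rw [zpow_zero, HH.one_n]; ring
  | succ k ih => rw [zpow_add_one, HH.mul_n, ih]; ring
  | pred k ih => rw [zpow_sub_one, HH.mul_n, HH.inv_n, ih]; ring

lemma HH.zpow_d (x : HH) (m : ℤ) :
    (tt x.n - 1) * (x ^ m).d = (tt (m * x.n) - 1) * x.d := by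
  induction m using Int.induction_on with
  | zero => rw [zpow_zero, HH.one_d, zero_mul, mul_zero, tt_zero, sub_self, zero_mul]
  | succ k ih =>
      rw [zpow_add_one, HH.mul_d, HH.zpow_n, mul_add, ih, mul_left_comm]
      have e3 : tt ((k:ℤ)*x.n) * tt x.n = tt (((k:ℤ)+1)*x.n) := by
        rw [tt_mul_tt]; congr 1; ring
      linear_combination x.d * e3
  | pred k ih =>
      rw [zpow_sub_one, HH.mul_d, HH.inv_d, HH.zpow_n, mul_add, ih, mul_left_comm]
      have h2 := R2.two_eq_zero
      have e1 : tt x.n * tt (-x.n) = 1 := by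
        rw [tt_mul_tt, show x.n + -x.n = 0 by ring, tt_zero]
      have e2 : tt ((-(k:ℤ))*x.n) * tt (-x.n) = tt ((-(k:ℤ)-1)*x.n) := by
        rw [tt_mul_tt]; congr 1; ring
      linear_combination (tt ((-(k:ℤ))*x.n) * x.d) * e1 - x.d * e2
        + (tt ((-(k:ℤ))*x.n) * x.d - tt ((-(k:ℤ)-1)*x.n) * x.d) * h2

/-- powers of an element with `d = 0` still have `d = 0`. -/
lemma HH.zpow_d_zero {e : ℤ} (he : e ≠ 0) (m : ℤ) : (((⟨0, e⟩ : HH)) ^ m).d = 0 := by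
  have h := HH.zpow_d ⟨0, e⟩ m
  simp only [mul_zero] at h
  rcases mul_eq_zero.1 h with h' | h'
  · exact absurd h' (tt_sub_one_ne_zero he)
  · exact h'

lemma HH.zpow_d_ne_zero {e : ℤ} (he : e ≠ 0) {m : ℤ} (hm : m ≠ 0) :
    (((⟨1, e⟩ : HH)) ^ m).d ≠ 0 := by
  intro h
  have h2 := HH.zpow_d ⟨1, e⟩ m
  rw [h, mul_zero, mul_one] at h2
  exact tt_sub_one_ne_zero (by simpa using mul_ne_zero hm he) h2.symm

/-! ### The construction of 2-cocycles on the kernel -/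

section Main

variable {p₁ p₂ : ℕ} (u : FreeGroup (Fin p₁) × FreeGroup (Fin p₂) →* Multiplicative ℤ)

/-- value of `u` on the first factor, additively. -/
def aU₁ (x : FreeGroup (Fin p₁)) : ℤ := Multiplicative.toAdd (u (x, 1))

/-- value of `u` on the second factor, additively. -/
def aU₂ (y : FreeGroup (Fin p₂)) : ℤ := Multiplicative.toAdd (u (1, y))

lemma aU₁_mul (x x' : FreeGroup (Fin p₁)) : aU₁ u (x * x') = aU₁ u x + aU₁ u x' := by
  unfold aU₁
  rw [show ((x*x' : FreeGroup (Fin p₁)), (1 : FreeGroup (Fin p₂))) = (x,1) * (x',1) by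
    rw [Prod.mk_mul_mk, one_mul], map_mul, toAdd_mul]

lemma aU₂_mul (y y' : FreeGroup (Fin p₂)) : aU₂ u (y * y') = aU₂ u y + aU₂ u y' := by
  unfold aU₂
  rw [show ((1 : FreeGroup (Fin p₁)), (y*y' : FreeGroup (Fin p₂))) = (1,y) * (1,y') by
    rw [Prod.mk_mul_mk, one_mul], map_mul, toAdd_mul]

lemma ker_aU {x : FreeGroup (Fin p₁)} {y : FreeGroup (Fin p₂)}
    (h : (x, y) ∈ u.ker) : aU₁ u x = -aU₂ u y := by
  have h1 : ((x : FreeGroup (Fin p₁)), (y : FreeGroup (Fin p₂))) = (x,1) * (1,y) := by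
    rw [Prod.mk_mul_mk, one_mul, mul_one]
  have h2 : u (x,1) * u (1,y) = 1 := by
    rw [← map_mul, ← h1]; exact h
  have := congrArg Multiplicative.toAdd h2
  rw [toAdd_mul, toAdd_one] at this
  unfold aU₁ aU₂
  omega

/-- The twisted Fox-derivative homomorphism on the first free factor. -/
def Psi₁ (i₁ : Fin p₁) : FreeGroup (Fin p₁) →* HH :=
  FreeGroup.lift fun i => (⟨if i = i₁ then 1 else 0, aU₁ u (FreeGroup.of i)⟩ : HH)

/-- The twisted Fox-derivative homomorphism on the second free factor. -/
def Psi₂ (j₁ : Fin p₂) : FreeGroup (Fin p₂) →* HH :=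
  FreeGroup.lift fun j => (⟨if j = j₁ then 1 else 0, aU₂ u (FreeGroup.of j)⟩ : HH)

lemma Psi₁_n (i₁ : Fin p₁) (x : FreeGroup (Fin p₁)) : (Psi₁ u i₁ x).n = aU₁ u x := by
  have h : (HH.nHom.comp (Psi₁ u i₁)) = (u.comp (MonoidHom.inl _ _)) := by
    apply FreeGroup.ext_hom
    intro a
    show Multiplicative.ofAdd ((Psi₁ u i₁ (FreeGroup.of a)).n) = u (FreeGroup.of a, 1)
    rw [Psi₁, FreeGroup.lift_apply_of]
    exact ofAdd_toAdd _
  have h2 := DFunLike.congr_fun h x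
  have h3 := congrArg Multiplicative.toAdd h2
  exact h3

lemma Psi₂_n (j₁ : Fin p₂) (y : FreeGroup (Fin p₂)) : (Psi₂ u j₁ y).n = aU₂ u y := by
  have h : (HH.nHom.comp (Psi₂ u j₁)) = (u.comp (MonoidHom.inr _ _)) := by
    apply FreeGroup.ext_hom
    intro a
    show Multiplicative.ofAdd ((Psi₂ u j₁ (FreeGroup.of a)).n) = u (1, FreeGroup.of a)
    rw [Psi₂, FreeGroup.lift_apply_of]
    exact ofAdd_toAdd _
  have h2 := DFunLike.congr_fun h y
  have h3 := congrArg Multiplicative.toAdd h2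
  exact h3

lemma aU₁_one : aU₁ u 1 = 0 := by
  unfold aU₁; rw [show ((1,1) : FreeGroup (Fin p₁) × FreeGroup (Fin p₂)) = 1 from rfl,
    map_one, toAdd_one]

lemma aU₂_one : aU₂ u 1 = 0 := by
  unfold aU₂; rw [show ((1,1) : FreeGroup (Fin p₁) × FreeGroup (Fin p₂)) = 1 from rfl,
    map_one, toAdd_one]

lemma aU₁_inv (x : FreeGroup (Fin p₁)) : aU₁ u x⁻¹ = -aU₁ u x := by
  have h := aU₁_mul u x x⁻¹
  rw [mul_inv_cancel, aU₁_one] at h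
  omega

lemma aU₂_inv (y : FreeGroup (Fin p₂)) : aU₂ u y⁻¹ = -aU₂ u y := by
  have h := aU₂_mul u y y⁻¹
  rw [mul_inv_cancel, aU₂_one] at h
  omega

lemma aU₁_zpow (x : FreeGroup (Fin p₁)) (m : ℤ) : aU₁ u (x^m) = m * aU₁ u x := by
  have h : ∀ z : FreeGroup (Fin p₁), (z, (1 : FreeGroup (Fin p₂)))
      = MonoidHom.inl (FreeGroup (Fin p₁)) (FreeGroup (Fin p₂)) z := fun z => rfl
  unfold aU₁
  rw [h, h, ← MonoidHom.comp_apply, ← MonoidHom.comp_apply, map_zpow, toAdd_zpow, smul_eq_mul]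

lemma aU₂_zpow (y : FreeGroup (Fin p₂)) (m : ℤ) : aU₂ u (y^m) = m * aU₂ u y := by
  have h : ∀ z : FreeGroup (Fin p₂), ((1 : FreeGroup (Fin p₁)), z)
      = MonoidHom.inr (FreeGroup (Fin p₁)) (FreeGroup (Fin p₂)) z := fun z => rfl
  unfold aU₂
  rw [h, h, ← MonoidHom.comp_apply, ← MonoidHom.comp_apply, map_zpow, toAdd_zpow, smul_eq_mul]

/-- the twisted Fox derivative on the first factor. -/
def DD (i₁ : Fin p₁) (x : FreeGroup (Fin p₁)) : R2 := (Psi₁ u i₁ x).d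

lemma DD_mul (i₁ : Fin p₁) (x x' : FreeGroup (Fin p₁)) :
    DD u i₁ (x*x') = DD u i₁ x + tt (aU₁ u x) * DD u i₁ x' := by
  unfold DD; rw [map_mul, HH.mul_d, Psi₁_n]

lemma DD_one (i₁ : Fin p₁) : DD u i₁ 1 = 0 := by unfold DD; rw [map_one, HH.one_d]

lemma Psi₁_of (i₁ i : Fin p₁) :
    Psi₁ u i₁ (FreeGroup.of i) = (⟨if i = i₁ then 1 else 0, aU₁ u (FreeGroup.of i)⟩ : HH) := by
  unfold Psi₁; rw [FreeGroup.lift_apply_of]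

lemma DD_of (i₁ i : Fin p₁) : DD u i₁ (FreeGroup.of i) = if i = i₁ then 1 else 0 := by
  unfold DD; rw [Psi₁_of]

/-- the twisted Fox-type cocycle on the second factor. -/
def cc (j₁ : Fin p₂) (y : FreeGroup (Fin p₂)) : R2 := tt (-(aU₂ u y)) * (Psi₂ u j₁ y).d

lemma cc_one (j₁ : Fin p₂) : cc u j₁ 1 = 0 := by unfold cc; rw [map_one, HH.one_d, mul_zero]

lemma cc_mul (j₁ : Fin p₂) (y y' : FreeGroup (Fin p₂)) :
    cc u j₁ (y*y') = cc u j₁ y' + tt (-(aU₂ u y')) * cc u j₁ y := by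
  unfold cc
  rw [map_mul, HH.mul_d, Psi₂_n, aU₂_mul, mul_add]
  have e1 : tt (-(aU₂ u y + aU₂ u y')) = tt (-(aU₂ u y')) * tt (-(aU₂ u y)) := by
    rw [tt_mul_tt]; congr 1; ring
  have e2 : tt (-(aU₂ u y + aU₂ u y')) * tt (aU₂ u y) = tt (-(aU₂ u y')) := by
    rw [tt_mul_tt]; congr 1; ring
  linear_combination ((Psi₂ u j₁ y).d) * e1 + ((Psi₂ u j₁ y').d) * e2

lemma DD_conj (i₁ : Fin p₁) {a : FreeGroup (Fin p₁)} (ha : DD u i₁ a = 0)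
    (hn : aU₁ u a ≠ 0) (w : FreeGroup (Fin p₁)) (n : ℤ) :
    DD u i₁ (a ^ n * w * (a ^ n)⁻¹) = tt (n * aU₁ u a) * DD u i₁ w := by
  unfold DD
  rw [map_mul, map_mul, map_inv, map_zpow]
  have hX : Psi₁ u i₁ a = (⟨0, aU₁ u a⟩ : HH) := by
    ext : 1
    · exact ha
    · exact Psi₁_n u i₁ a
  rw [hX]
  have hXd : (((⟨0, aU₁ u a⟩ : HH)) ^ n).d = 0 := HH.zpow_d_zero hn n
  rw [HH.mul_d, HH.mul_d, HH.inv_d, hXd]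
  simp only [mul_zero, add_zero, zero_add]
  rw [HH.zpow_n]

lemma exists_gen₁ (hu : ∃ a, u (a, 1) ≠ 1) : ∃ i, aU₁ u (FreeGroup.of i) ≠ 0 := by
  by_contra h
  push_neg at h
  obtain ⟨a, ha⟩ := hu
  refine ha ?_
  have hh : u.comp (MonoidHom.inl (FreeGroup (Fin p₁)) (FreeGroup (Fin p₂))) = 1 := by
    apply FreeGroup.ext_hom
    intro i
    show u (FreeGroup.of i, 1) = 1
    have h2 := h i
    unfold aU₁ at h2
    rwa [toAdd_eq_zero] at h2
  exact DFunLike.congr_fun hh a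

lemma exists_gen₂ (hu : ∃ b, u (1, b) ≠ 1) : ∃ j, aU₂ u (FreeGroup.of j) ≠ 0 := by
  by_contra h
  push_neg at h
  obtain ⟨b, hb⟩ := hu
  refine hb ?_
  have hh : u.comp (MonoidHom.inr (FreeGroup (Fin p₁)) (FreeGroup (Fin p₂))) = 1 := by
    apply FreeGroup.ext_hom
    intro j
    show u (1, FreeGroup.of j) = 1
    have h2 := h j
    unfold aU₂ at h2
    rwa [toAdd_eq_zero] at h2
  exact DFunLike.congr_fun hh b

lemma first_factor (hp₁ : 2 ≤ p₁) (hu : ∃ a, u (a, 1) ≠ 1) :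
    ∃ (i₁ : Fin p₁) (a w : FreeGroup (Fin p₁)),
      aU₁ u a ≠ 0 ∧ DD u i₁ a = 0 ∧ aU₁ u w = 0 ∧ DD u i₁ w ≠ 0 := by
  obtain ⟨i₀, hα⟩ := exists_gen₁ u hu
  by_cases hA : ∃ i, aU₁ u (FreeGroup.of i) = 0
  · obtain ⟨i₁, hi₁⟩ := hA
    have hne : i₀ ≠ i₁ := fun hEq => hα (hEq ▸ hi₁)
    refine ⟨i₁, FreeGroup.of i₀, FreeGroup.of i₁, hα, ?_, hi₁, ?_⟩
    · rw [DD_of, if_neg hne]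
    · rw [DD_of, if_pos rfl]; exact one_ne_zero
  · push_neg at hA
    have hnt : Nontrivial (Fin p₁) := ⟨⟨0, by omega⟩, ⟨1, by omega⟩, by simp [Fin.ext_iff]⟩
    obtain ⟨i₁, hne⟩ := exists_ne i₀
    have hα' : aU₁ u (FreeGroup.of i₁) ≠ 0 := hA i₁
    refine ⟨i₁, FreeGroup.of i₀,
      (FreeGroup.of i₁) ^ (aU₁ u (FreeGroup.of i₀)) *
        (FreeGroup.of i₀) ^ (-(aU₁ u (FreeGroup.of i₁))), hα, ?_, ?_, ?_⟩
    · rw [DD_of, if_neg (Ne.symm hne)]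
    · rw [aU₁_mul, aU₁_zpow, aU₁_zpow]; ring
    · rw [DD_mul]
      have h1 : DD u i₁ ((FreeGroup.of i₀) ^ (-(aU₁ u (FreeGroup.of i₁)))) = 0 := by
        unfold DD
        rw [map_zpow, show Psi₁ u i₁ (FreeGroup.of i₀)
          = (⟨0, aU₁ u (FreeGroup.of i₀)⟩ : HH) by
            rw [Psi₁_of, if_neg (Ne.symm hne)]]
        exact HH.zpow_d_zero hα _
      rw [h1, mul_zero, add_zero]
      unfold DD
      rw [map_zpow, show Psi₁ u i₁ (FreeGroup.of i₁)
        = (⟨1, aU₁ u (FreeGroup.of i₁)⟩ : HH) by rw [Psi₁_of, if_pos rfl]]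
      exact HH.zpow_d_ne_zero hα' hα

lemma second_factor (hp₂ : 2 ≤ p₂) (hu : ∃ b, u (1, b) ≠ 1) :
    ∃ (j₁ : Fin p₂) (yy : FreeGroup (Fin p₂)), aU₂ u yy = 0 ∧ cc u j₁ yy ≠ 0 := by
  obtain ⟨j₀, hβ⟩ := exists_gen₂ u hu
  have hcc : ∀ (j₁ : Fin p₂) (y : FreeGroup (Fin p₂)), aU₂ u y = 0 →
      cc u j₁ y = (Psi₂ u j₁ y).d := by
    intro j₁ y hy
    unfold cc
    rw [hy, neg_zero, tt_zero, one_mul]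
  by_cases hA : ∃ j, aU₂ u (FreeGroup.of j) = 0
  · obtain ⟨j₁, hj₁⟩ := hA
    refine ⟨j₁, FreeGroup.of j₁, hj₁, ?_⟩
    rw [hcc j₁ _ hj₁]
    unfold Psi₂
    rw [FreeGroup.lift_apply_of, if_pos rfl]
    exact one_ne_zero
  · push_neg at hA
    have hnt : Nontrivial (Fin p₂) := ⟨⟨0, by omega⟩, ⟨1, by omega⟩, by simp [Fin.ext_iff]⟩
    obtain ⟨j₁, hne⟩ := exists_ne j₀
    have hβ' : aU₂ u (FreeGroup.of j₁) ≠ 0 := hA j₁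
    have hy0 : aU₂ u ((FreeGroup.of j₁) ^ (aU₂ u (FreeGroup.of j₀)) *
        (FreeGroup.of j₀) ^ (-(aU₂ u (FreeGroup.of j₁)))) = 0 := by
      rw [aU₂_mul, aU₂_zpow, aU₂_zpow]; ring
    refine ⟨j₁, _, hy0, ?_⟩
    rw [hcc j₁ _ hy0]
    rw [map_mul, HH.mul_d, map_zpow, map_zpow]
    have h1 : ((Psi₂ u j₁ (FreeGroup.of j₀)) ^ (-(aU₂ u (FreeGroup.of j₁)))).d = 0 := by
      rw [show Psi₂ u j₁ (FreeGroup.of j₀) = (⟨0, aU₂ u (FreeGroup.of j₀)⟩ : HH) by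
        unfold Psi₂; rw [FreeGroup.lift_apply_of, if_neg (Ne.symm hne)]]
      exact HH.zpow_d_zero hβ _
    rw [h1, mul_zero, add_zero]
    rw [show Psi₂ u j₁ (FreeGroup.of j₁) = (⟨1, aU₂ u (FreeGroup.of j₁)⟩ : HH) by
      unfold Psi₂; rw [FreeGroup.lift_apply_of, if_pos rfl]]
    exact HH.zpow_d_ne_zero hβ' hβ

/-- The family of inhomogeneous 2-cochains on `ker u`. -/
def co (i₁ : Fin p₁) (j₁ : Fin p₂) (γ : R2) : ↥u.ker × ↥u.ker → ZMod 2 :=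
  fun g => eps (γ * cc u j₁ g.1.val.2 * DD u i₁ g.2.val.1)

lemma co_mem (i₁ : Fin p₁) (j₁ : Fin p₂) (γ : R2) :
    co u i₁ j₁ γ ∈ groupCohomology.cocycles₂ (Rep.trivial (ZMod 2) ↥u.ker (ZMod 2)) := by
  rw [groupCohomology.mem_cocycles₂_iff]
  intro g h j
  rw [Rep.trivial_ρ_apply]
  show eps (γ * cc u j₁ (g.val.2 * h.val.2) * DD u i₁ j.val.1)
      + eps (γ * cc u j₁ g.val.2 * DD u i₁ h.val.1)
    = eps (γ * cc u j₁ h.val.2 * DD u i₁ j.val.1)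
      + eps (γ * cc u j₁ g.val.2 * DD u i₁ (h.val.1 * j.val.1))
  rw [cc_mul, DD_mul, ← map_add, ← map_add]
  congr 1
  have hk : aU₁ u h.val.1 = -aU₂ u h.val.2 :=
    ker_aU u (by rw [Prod.mk.eta]; exact h.2)
  rw [hk]
  ring

lemma co_add (i₁ : Fin p₁) (j₁ : Fin p₂) (γ γ' : R2) :
    co u i₁ j₁ (γ + γ') = co u i₁ j₁ γ + co u i₁ j₁ γ' := by
  funext g
  show eps ((γ + γ') * cc u j₁ g.1.val.2 * DD u i₁ g.2.val.1)
    = eps (γ * cc u j₁ g.1.val.2 * DD u i₁ g.2.val.1)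
      + eps (γ' * cc u j₁ g.1.val.2 * DD u i₁ g.2.val.1)
  rw [add_mul, add_mul, map_add]

end Main

/-- symmetry of coboundaries on commuting pairs, for a trivial rep. -/
lemma symm_of_coboundary {G : Type} [Group G]
    {f : groupCohomology.cocycles₂ (Rep.trivial (ZMod 2) G (ZMod 2))}
    (hf : ⇑f ∈ groupCohomology.coboundaries₂ (Rep.trivial (ZMod 2) G (ZMod 2)))
    {g h : G} (hc : g * h = h * g) : f (g, h) = f (h, g) := by
  obtain ⟨x, hx0⟩ := hf
  have hx : ∀ g h : G, (Rep.trivial (ZMod 2) G (ZMod 2)).ρ g (x h) - x (g * h) + x g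
      = f (g, h) := fun g h => by rw [← hx0]; rfl
  rw [← hx g h, ← hx h g, Rep.trivial_ρ_apply, Rep.trivial_ρ_apply, hc]
  abel

end StallingsAux


/-- Let `G = F_{p₁} × F_{p₂}` be a product of free groups of ranks
`p₁, p₂ ≥ 2`, and let `u : G → ℤ` be a homomorphism which is nonzero on each
factor. Then `H²(ker u, ℤ/2ℤ)` is infinite. -/
theorem H2_of_kernel_infinite (p₁ p₂ : ℕ) (hp₁ : 2 ≤ p₁) (hp₂ : 2 ≤ p₂)
    (u : FreeGroup (Fin p₁) × FreeGroup (Fin p₂) →* Multiplicative ℤ)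
    (hu₁ : ∃ a : FreeGroup (Fin p₁), u (a, 1) ≠ 1)
    (hu₂ : ∃ b : FreeGroup (Fin p₂), u (1, b) ≠ 1) :
    Infinite (groupCohomology (Rep.trivial (ZMod 2) ↥u.ker (ZMod 2)) 2) := by
  classical
  obtain ⟨i₁, a, w, hαa, hDa, hw0, hDw⟩ := first_factor u hp₁ hu₁
  obtain ⟨j₁, yy, hy0, hcy⟩ := second_factor u hp₂ hu₂
  set A : Rep (ZMod 2) ↥u.ker := Rep.trivial (ZMod 2) ↥u.ker (ZMod 2) with hA
  set α : ℤ := aU₁ u a with hαdef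
  have hP₀ : (cc u j₁ yy * DD u i₁ w : R2) ≠ 0 := mul_ne_zero hcy hDw
  let QQ : ℤ →₀ ZMod 2 := (cc u j₁ yy * DD u i₁ w).coeff
  have hQne : QQ.support.Nonempty :=
    Finsupp.support_nonempty_iff.2 (mt AddMonoidAlgebra.coeff_eq_zero.1 hP₀)
  set v : ℤ := QQ.support.min' hQne with hv
  have hv1 : QQ v ≠ 0 := Finsupp.mem_support_iff.1 (QQ.support.min'_mem hQne)
  have hv2 : ∀ s : ℤ, s < v → QQ s = 0 := by
    intro s hs
    by_contra hcon
    exact absurd (Finset.min'_le _ s (Finsupp.mem_support_iff.2 hcon)) (by omega)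
  have hgmem : ∀ n : ℤ, (a^n * w * (a^n)⁻¹, (1 : FreeGroup (Fin p₂))) ∈ u.ker := by
    intro n
    rw [MonoidHom.mem_ker, ← toAdd_eq_zero]
    show aU₁ u (a^n * w * (a^n)⁻¹) = 0
    rw [aU₁_mul, aU₁_mul, aU₁_inv, aU₁_zpow, hw0]
    ring
  have hhmem : ((1 : FreeGroup (Fin p₁)), yy) ∈ u.ker := by
    rw [MonoidHom.mem_ker, ← toAdd_eq_zero]
    show aU₂ u yy = 0
    exact hy0
  set gE : ℤ → ↥u.ker := fun n => ⟨_, hgmem n⟩ with hgE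
  set hE : ↥u.ker := ⟨_, hhmem⟩ with hhE
  have hcomm : ∀ n : ℤ, hE * gE n = gE n * hE := by
    intro n
    apply Subtype.ext
    show ((1, yy) : FreeGroup (Fin p₁) × FreeGroup (Fin p₂)) * (a^n*w*(a^n)⁻¹, 1)
      = ((a^n * w * (a^n)⁻¹, 1) : FreeGroup (Fin p₁) × FreeGroup (Fin p₂)) * (1, yy)
    rw [Prod.mk_mul_mk, Prod.mk_mul_mk, one_mul, mul_one, one_mul, mul_one]
  set F : ℕ → groupCohomology.cocycles₂ A := fun N =>
    ⟨co u i₁ j₁ (tt (-(N:ℤ) * α - v)), co_mem u i₁ j₁ _⟩ with hF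
  have hval0 : ∀ (γ : R2) (n : ℤ), co u i₁ j₁ γ (gE n, hE) = 0 := by
    intro γ n
    show eps (γ * cc u j₁ (1 : FreeGroup (Fin p₂)) * DD u i₁ (1 : FreeGroup (Fin p₁))) = 0
    rw [cc_one, mul_zero, zero_mul, map_zero]
  have hval1 : ∀ (N : ℕ) (n : ℤ),
      co u i₁ j₁ (tt (-(N:ℤ) * α - v)) (hE, gE n) = QQ (v + ((N:ℤ) - n) * α) := by
    intro N n
    show eps (tt (-(N:ℤ) * α - v) * cc u j₁ yy * DD u i₁ (a^n * w * (a^n)⁻¹))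
      = QQ (v + ((N:ℤ) - n) * α)
    rw [DD_conj u i₁ hDa hαa w n]
    have hre : tt (-(N:ℤ) * α - v) * cc u j₁ yy * (tt (n * aU₁ u a) * DD u i₁ w)
        = tt (-(N:ℤ) * α - v + n * α) * (cc u j₁ yy * DD u i₁ w) := by
      rw [← tt_mul_tt, ← hαdef]; ring
    rw [hre]
    rw [eps_tt_mul (-(N:ℤ) * α - v + n * α) (cc u j₁ yy * DD u i₁ w)]
    show QQ (-(-(N:ℤ) * α - v + n * α)) = QQ (v + ((N:ℤ) - n) * α)
    congr 1
    ring
  have key : ∀ N M : ℕ, N ≠ M → ¬ (⇑(F N - F M) ∈ groupCohomology.coboundaries₂ A) := by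
    intro N M hNM hmem
    have hδ : ((M:ℤ) - N) * α ≠ 0 :=
      mul_ne_zero (sub_ne_zero.2 (fun hc => hNM (by exact_mod_cast hc.symm))) hαa
    have heval : ∀ n : ℤ,
        QQ (v + ((N:ℤ) - n) * α) - QQ (v + ((M:ℤ) - n) * α) = 0 := by
      intro n
      have h1 := symm_of_coboundary hmem (hcomm n)
      have h2 : (↑(F N - F M) : ↥u.ker × ↥u.ker → ZMod 2) (hE, gE n)
          = co u i₁ j₁ (tt (-(N:ℤ) * α - v)) (hE, gE n)
            - co u i₁ j₁ (tt (-(M:ℤ) * α - v)) (hE, gE n) := rfl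
      have h3 : (↑(F N - F M) : ↥u.ker × ↥u.ker → ZMod 2) (gE n, hE)
          = co u i₁ j₁ (tt (-(N:ℤ) * α - v)) (gE n, hE)
            - co u i₁ j₁ (tt (-(M:ℤ) * α - v)) (gE n, hE) := rfl
      have h4 : (↑(F N - F M) : ↥u.ker × ↥u.ker → ZMod 2) (hE, gE n)
          = (↑(F N - F M) : ↥u.ker × ↥u.ker → ZMod 2) (gE n, hE) := h1
      rw [h2, h3, hval0, hval0, hval1, hval1, sub_zero] at h4
      exact h4
    rcases lt_or_gt_of_ne hδ with hlt | hgt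
    · have h2 := heval (N:ℤ)
      rw [show v + ((N:ℤ) - (N:ℤ)) * α = v by ring] at h2
      rw [hv2 (v + ((M:ℤ) - (N:ℤ)) * α) (by linarith), sub_zero] at h2
      exact hv1 h2
    · have h2 := heval (M:ℤ)
      rw [show v + ((M:ℤ) - (M:ℤ)) * α = v by ring] at h2
      rw [hv2 (v + ((N:ℤ) - (M:ℤ)) * α) (by nlinarith), zero_sub, neg_eq_zero] at h2
      exact hv1 h2
  have hinj : Function.Injective
      (fun N => groupCohomology.H2π A (F N)) := by
    intro N M h
    by_contra hNM
    exact key N M hNM ((groupCohomology.H2π_eq_iff _ _).1 h)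
  have hInf : Infinite (groupCohomology.H2 A) := Infinite.of_injective _ hinj
  exact hInf
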